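/- Let d ≥ 1 and N ≥ 0 be integers, let 0 = k_0 < k_1 < ⋯ < k_N < k_{N+1} = d be integers, and let F_1 ≥ F_2 ≥ ⋯ ≥ F_{N+1} > 0 be real numbers. For 1 ≤ n ≤ N+1 define ρ_n = F_n^{−1} · ∏_{m=1}^{N+1} F_m^{(k_m − k_{m−1})/d} (real powers). Suppose m_1, …, m_{N+1} are nonnegative integers with m_1 + ⋯ + m_{N+1} = d and with the partial-sum constraint m_1 + ⋯ + m_n ≤ k_n for every 1 ≤ n ≤ N. Then ρ_1^{m_1} ⋯ ρ_{N+1}^{m_{N+1}} ≥ 1; equivalently, ∏_{n=1}^{N+1} F_n^{k_n − k_{n−1} − m_n} ≥ 1. -/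

import Mathlib

/- STATEMENT 11: The admissibility lemma of Section 3.5 of the paper. -/

theorem admissibility
    (d N : ℕ) (hd : 1 ≤ d)
    (k : ℕ → ℕ) (hk0 : k 0 = 0) (hkN : k (N + 1) = d)
    (hkmono : ∀ n, n ≤ N → k n < k (n + 1))
    (F : ℕ → ℝ) (hFpos : ∀ n, 1 ≤ n → n ≤ N + 1 → 0 < F n)
    (hFmono : ∀ n, 1 ≤ n → n ≤ N → F (n + 1) ≤ F n)
    (m : ℕ → ℕ) (hmsum : ∑ n ∈ Finset.Icc 1 (N + 1), m n = d)
    (hpartial : ∀ n, 1 ≤ n → n ≤ N → ∑ i ∈ Finset.Icc 1 n, m i ≤ k n) :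
    -- ρ_1^{m_1} ⋯ ρ_{N+1}^{m_{N+1}} ≥ 1, where
    -- ρ_n = F_n⁻¹ ∏_{m'=1}^{N+1} F_{m'}^{(k_{m'} − k_{m'−1})/d}
    (1 : ℝ) ≤ ∏ n ∈ Finset.Icc 1 (N + 1),
        ((F n)⁻¹ * ∏ m' ∈ Finset.Icc 1 (N + 1),
            F m' ^ (((k m' : ℝ) - (k (m' - 1) : ℝ)) / d)) ^ m n
    ∧ -- equivalently, ∏_{n=1}^{N+1} F_n^{k_n − k_{n−1} − m_n} ≥ 1
    (1 : ℝ) ≤ ∏ n ∈ Finset.Icc 1 (N + 1),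
        F n ^ ((k n : ℝ) - (k (n - 1) : ℝ) - (m n : ℝ)) := by
  have hd0 : (d : ℝ) ≠ 0 := by positivity
  set L : ℕ → ℝ := fun n => Real.log (F n) with hL
  set a : ℕ → ℝ := fun n => (k n : ℝ) - (k (n - 1) : ℝ) - (m n : ℝ) with ha
  -- telescoping sum
  have htel : ∀ n, ∑ i ∈ Finset.Icc 1 n, ((k i : ℝ) - (k (i - 1) : ℝ))
      = (k n : ℝ) := by
    intro n
    induction n with
    | zero => simp [hk0]
    | succ n ih =>
      rw [Finset.sum_Icc_succ_top (by omega), ih]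
      simp
  have hS : ∀ n, ∑ i ∈ Finset.Icc 1 n, a i
      = (k n : ℝ) - ∑ i ∈ Finset.Icc 1 n, (m i : ℝ) := by
    intro n
    have : ∑ i ∈ Finset.Icc 1 n, a i
        = (∑ i ∈ Finset.Icc 1 n, ((k i : ℝ) - (k (i - 1) : ℝ)))
          - ∑ i ∈ Finset.Icc 1 n, (m i : ℝ) := by
      rw [← Finset.sum_sub_distrib]
    rw [this, htel]
  have hSnonneg : ∀ n, n ≤ N → 0 ≤ ∑ i ∈ Finset.Icc 1 n, a i := by
    intro n hn
    rcases Nat.eq_zero_or_pos n with h | h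
    · subst h; simp
    · rw [hS]
      have h1 := hpartial n h hn
      have h2 : (∑ i ∈ Finset.Icc 1 n, (m i : ℝ)) ≤ (k n : ℝ) := by
        push_cast [← Nat.cast_sum]
        exact_mod_cast h1
      linarith
  have hlogle : ∀ n, 1 ≤ n → n ≤ N → L (n + 1) ≤ L n := by
    intro n h1 h2
    exact Real.log_le_log (hFpos (n + 1) (by omega) (by omega)) (hFmono n h1 h2)
  have key : ∀ n, n ≤ N + 1 →
      (∑ i ∈ Finset.Icc 1 n, a i) * L n ≤ ∑ i ∈ Finset.Icc 1 n, a i * L i := by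
    intro n hn
    induction n with
    | zero => simp
    | succ n ih =>
      have ih' := ih (by omega)
      rw [Finset.sum_Icc_succ_top (by omega), Finset.sum_Icc_succ_top (by omega),
        add_mul]
      have h1 : (∑ i ∈ Finset.Icc 1 n, a i) * L (n + 1)
          ≤ (∑ i ∈ Finset.Icc 1 n, a i) * L n := by
        rcases Nat.eq_zero_or_pos n with h | h
        · subst h; simp
        · exact mul_le_mul_of_nonneg_left (hlogle n h (by omega))
            (hSnonneg n (by omega))
      linarith
  have hmsumR : ∑ i ∈ Finset.Icc 1 (N + 1), (m i : ℝ) = (d : ℝ) := by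
    push_cast [← Nat.cast_sum, hmsum]
    ring
  have hsum0 : ∑ i ∈ Finset.Icc 1 (N + 1), a i = 0 := by
    rw [hS, hkN, hmsumR]; ring
  have hlog : 0 ≤ ∑ i ∈ Finset.Icc 1 (N + 1), a i * L i := by
    have := key (N + 1) le_rfl
    rw [hsum0] at this
    simpa using this
  have hsecond : (1 : ℝ) ≤ ∏ n ∈ Finset.Icc 1 (N + 1), F n ^ a n := by
    have heq : ∏ n ∈ Finset.Icc 1 (N + 1), F n ^ a n
        = Real.exp (∑ n ∈ Finset.Icc 1 (N + 1), a n * L n) := by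
      rw [Real.exp_sum]
      refine Finset.prod_congr rfl ?_
      intro i hi
      rw [Finset.mem_Icc] at hi
      rw [Real.rpow_def_of_pos (hFpos i hi.1 hi.2), mul_comm]
    rw [heq]
    exact Real.one_le_exp hlog
  refine ⟨?_, hsecond⟩
  -- show first product equals second
  set C : ℝ := ∏ m' ∈ Finset.Icc 1 (N + 1),
      F m' ^ (((k m' : ℝ) - (k (m' - 1) : ℝ)) / d) with hC
  have heq1 : ∏ n ∈ Finset.Icc 1 (N + 1), ((F n)⁻¹ * C) ^ m n
      = (∏ n ∈ Finset.Icc 1 (N + 1), (F n)⁻¹ ^ m n) * C ^ d := by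
    rw [← hmsum, ← Finset.prod_pow_eq_pow_sum, ← Finset.prod_mul_distrib]
    exact Finset.prod_congr rfl fun i _ => mul_pow _ _ _
  have hCd : C ^ d = ∏ n ∈ Finset.Icc 1 (N + 1),
      F n ^ ((k n : ℝ) - (k (n - 1) : ℝ)) := by
    rw [hC, ← Finset.prod_pow]
    refine Finset.prod_congr rfl ?_
    intro i hi
    rw [Finset.mem_Icc] at hi
    rw [← Real.rpow_natCast (F i ^ (((k i : ℝ) - (k (i - 1) : ℝ)) / d)) d,
      ← Real.rpow_mul (hFpos i hi.1 hi.2).le, div_mul_cancel₀ _ hd0]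
  have hinv : ∀ i ∈ Finset.Icc 1 (N + 1), (F i)⁻¹ ^ m i = F i ^ (-(m i : ℝ)) := by
    intro i hi
    rw [Finset.mem_Icc] at hi
    rw [inv_pow, ← Real.rpow_natCast (F i) (m i),
      ← Real.rpow_neg (hFpos i hi.1 hi.2).le]
  have heq2 : ∏ n ∈ Finset.Icc 1 (N + 1), ((F n)⁻¹ * C) ^ m n
      = ∏ n ∈ Finset.Icc 1 (N + 1), F n ^ a n := by
    rw [heq1, hCd, Finset.prod_congr rfl hinv, ← Finset.prod_mul_distrib]
    refine Finset.prod_congr rfl ?_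
    intro i hi
    rw [Finset.mem_Icc] at hi
    rw [← Real.rpow_add (hFpos i hi.1 hi.2)]
    ring_nf
    congr 1; simp only [ha]; ring
  calc (1 : ℝ) ≤ ∏ n ∈ Finset.Icc 1 (N + 1), F n ^ a n := hsecond
    _ = _ := heq2.symm
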